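/- Let R be a commutative integral domain of finite character with field of fractions Q, and let Λ be a module-finite R-algebra. Let M, N, K be finitely generated Λ-modules which are torsion-free as R-modules. Assume that (i) M_𝔪 is a direct summand of N_𝔪 (as Λ_𝔪-modules) for all maximal ideals 𝔪 of R, and (ii) M_Q is a direct summand of K_Q (as Λ_Q-modules). Then M is a direct summand of N ⊕ K. -/

import Mathlib

open scoped TensorProduct

universe u

namespace Stmt8Aux

variable {R : Type u} [CommRing R]

/-- `x ↦ x ⊗ 1`, `R`-linear. -/
noncomputable def unitMapR (R : Type u) [CommRing R] (M A : Type u) [AddCommGroup M] [Module R M]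
    [CommRing A] [Algebra R A] : M →ₗ[R] M ⊗[R] A :=
  (TensorProduct.mk R M A).flip 1

@[simp] lemma unitMapR_apply {M A : Type u} [AddCommGroup M] [Module R M]
    [CommRing A] [Algebra R A] (x : M) : unitMapR R M A x = x ⊗ₜ 1 := rfl

instance isLocalizedModule_unitMapR (M : Type u) [AddCommGroup M] [Module R M] (S : Submonoid R) :
    IsLocalizedModule S (unitMapR R M (Localization S)) := by
  haveI h0 : IsLocalizedModule S (TensorProduct.mk R (Localization S) M 1) :=
    (isLocalizedModule_iff_isBaseChange S (Localization S) _).mpr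
      (TensorProduct.isBaseChange R M (Localization S))
  have heq : unitMapR R M (Localization S) =
      ((TensorProduct.comm R (Localization S) M :
          (Localization S) ⊗[R] M ≃ₗ[R] M ⊗[R] (Localization S)) ∘ₗ
        (TensorProduct.mk R (Localization S) M 1)) := by
    ext x
    simp [unitMapR]
  rw [heq]
  infer_instance

lemma unitMapR_injective (M : Type u) [AddCommGroup M] [Module R M] [NoZeroSMulDivisors R M]
    (S : Submonoid R) (hS : (0:R) ∉ S) :
    Function.Injective (unitMapR R M (Localization S)) := by
  intro x y hxy
  have h0 : unitMapR R M (Localization S) (x - y) = 0 := by rw [map_sub, hxy, sub_self]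
  obtain ⟨s, hs⟩ := (IsLocalizedModule.eq_zero_iff S _).mp h0
  rw [Submonoid.smul_def] at hs
  have hs0 : (s : R) ≠ 0 := fun h => hS (h ▸ s.2)
  have := (NoZeroSMulDivisors.eq_zero_or_eq_zero_of_smul_eq_zero hs).resolve_left hs0
  exact sub_eq_zero.mp this

/-- `x ↦ x ⊗ 1`, `Λ`-linear. -/
noncomputable def unitMap (R : Type u) [CommRing R] (Λ : Type u) [Ring Λ] [Algebra R Λ]
    (M A : Type u) [AddCommGroup M] [Module R M] [Module Λ M]
    [IsScalarTower R Λ M] [CommRing A] [Algebra R A] : M →ₗ[Λ] M ⊗[R] A where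
  toFun x := x ⊗ₜ 1
  map_add' x y := TensorProduct.add_tmul x y 1
  map_smul' a x := (TensorProduct.smul_tmul' a x 1).symm

@[simp] lemma unitMap_apply {Λ : Type u} [Ring Λ] [Algebra R Λ]
    {M A : Type u} [AddCommGroup M] [Module R M] [Module Λ M]
    [IsScalarTower R Λ M] [CommRing A] [Algebra R A] (x : M) :
    unitMap R Λ M A x = x ⊗ₜ 1 := rfl

end Stmt8Aux

namespace Stmt8Aux

variable {R : Type u} [CommRing R]

lemma clear_denominators
    {Λ : Type u} [Ring Λ] [Algebra R Λ]
    {M K : Type u}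
    [AddCommGroup M] [Module R M] [Module Λ M] [IsScalarTower R Λ M]
    [Module.Finite Λ M] [NoZeroSMulDivisors R M]
    [AddCommGroup K] [Module R K] [Module Λ K] [IsScalarTower R Λ K]
    [Module.Finite Λ K] [NoZeroSMulDivisors R K]
    (S : Submonoid R) (hS : (0:R) ∉ S)
    (F : M ⊗[R] Localization S →ₗ[Λ] K ⊗[R] Localization S)
    (G : K ⊗[R] Localization S →ₗ[Λ] M ⊗[R] Localization S)
    (hGF : G.comp F = LinearMap.id) :
    ∃ (γ : M →ₗ[Λ] K) (δ : K →ₗ[Λ] M) (s : R), s ∈ S ∧ ∀ x : M, δ (γ x) = s • x := by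
  classical
  have hinjM : Function.Injective (unitMap R Λ M (Localization S)) :=
    unitMapR_injective M S hS
  have hinjK : Function.Injective (unitMap R Λ K (Localization S)) :=
    unitMapR_injective K S hS
  -- a general "one-map" clearing step
  have main : ∀ (M' K' : Type u)
      [AddCommGroup M'] [Module R M'] [Module Λ M'] [IsScalarTower R Λ M']
      [Module.Finite Λ M']
      [AddCommGroup K'] [Module R K'] [Module Λ K'] [IsScalarTower R Λ K']
      [NoZeroSMulDivisors R K']
      (F' : M' ⊗[R] Localization S →ₗ[Λ] K' ⊗[R] Localization S),
      ∃ (φ : M' →ₗ[Λ] K') (a : R), a ∈ S ∧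
        ∀ x : M', unitMap R Λ K' (Localization S) (φ x) =
          a • F' (unitMap R Λ M' (Localization S) x) := by
    intro M' K' _ _ _ _ _ _ _ _ _ _ F'
    set ιM := unitMap R Λ M' (Localization S) with hιM
    set ιK := unitMap R Λ K' (Localization S) with hιK
    have hinj : Function.Injective ιK := unitMapR_injective K' S hS
    have hsurj : ∀ z : K' ⊗[R] Localization S, ∃ (k : K') (s : R), s ∈ S ∧ s • z = ιK k := by
      intro z
      obtain ⟨⟨k, s⟩, h⟩ := IsLocalizedModule.surj S (unitMapR R K' (Localization S)) z
      exact ⟨k, s, s.2, by rw [Submonoid.smul_def] at h; exact h⟩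
    choose dk ds hdsS hds using hsurj
    obtain ⟨T, hT⟩ : (⊤ : Submodule Λ M').FG := Module.Finite.fg_top (R := Λ) (M := M')
    set a : R := ∏ x ∈ T, ds (F' (ιM x)) with ha
    have haS : a ∈ S := Submonoid.prod_mem S (fun i _ => hdsS _)
    -- the Λ-submodule of elements with denominator a
    set P : Submodule Λ M' :=
      { carrier := {x | ∃ k : K', a • F' (ιM x) = ιK k}
        add_mem' := by
          rintro x y ⟨k₁, h₁⟩ ⟨k₂, h₂⟩
          exact ⟨k₁ + k₂, by rw [map_add, map_add, smul_add, h₁, h₂, map_add]⟩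
        zero_mem' := ⟨0, by simp⟩
        smul_mem' := by
          rintro c x ⟨k, h⟩
          refine ⟨c • k, ?_⟩
          rw [map_smul, map_smul, smul_comm, h, map_smul] } with hP
    have hPT : ∀ x ∈ T, x ∈ P := by
      intro x hx
      refine ⟨(∏ y ∈ T.erase x, ds (F' (ιM y))) • dk (F' (ιM x)), ?_⟩
      have hprod : ds (F' (ιM x)) * ∏ y ∈ T.erase x, ds (F' (ιM y)) = a :=
        Finset.mul_prod_erase T (fun y => ds (F' (ιM y))) hx
      rw [LinearMap.map_smul_of_tower]
      rw [← hds (F' (ιM x))]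
      rw [← mul_smul, ← hprod, mul_comm]
    have hall : ∀ x : M', x ∈ P := by
      have hle : (⊤ : Submodule Λ M') ≤ P := by
        rw [← hT]
        exact Submodule.span_le.mpr hPT
      exact fun x => hle Submodule.mem_top
    choose kf hkf using hall
    have hadd : ∀ x y : M', kf (x + y) = kf x + kf y := by
      intro x y
      apply hinj
      rw [map_add, ← hkf, ← hkf, ← hkf, map_add, map_add, smul_add]
    have hsmul : ∀ (c : Λ) (x : M'), kf (c • x) = c • kf x := by
      intro c x
      apply hinj
      rw [map_smul, ← hkf, ← hkf, map_smul, map_smul, smul_comm]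
    refine ⟨{ toFun := kf
              map_add' := hadd
              map_smul' := fun c x => by rw [RingHom.id_apply]; exact hsmul c x },
      a, haS, fun x => (hkf x).symm⟩
  obtain ⟨γ, a, haS, hγ⟩ := main M K F
  obtain ⟨δ, b, hbS, hδ⟩ := main K M G
  refine ⟨γ, δ, b * a, S.mul_mem hbS haS, fun x => ?_⟩
  apply hinjM
  rw [LinearMap.map_smul_of_tower]
  rw [hδ (γ x), hγ x, LinearMap.map_smul_of_tower, ← mul_smul]
  have : G (F (unitMap R Λ M (Localization S) x)) = unitMap R Λ M (Localization S) x := by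
    have := LinearMap.congr_fun hGF (unitMap R Λ M (Localization S) x)
    simpa using this
  rw [this]

end Stmt8Aux

namespace Stmt8Aux

variable {R : Type u} [CommRing R]

lemma endo_injective (M : Type u) [AddCommGroup M] [Module R M]
    [Module.Finite R M] [NoZeroSMulDivisors R M]
    (𝔪 : Ideal R) [𝔪.IsPrime] (u : M →ₗ[R] M) (t : R) (ht : t ∈ 𝔪.primeCompl)
    (hu : ∀ x : M, ∃ y, u y = t • x) : Function.Injective u := by
  classical
  haveI h0 : IsLocalizedModule 𝔪.primeCompl
      (TensorProduct.mk R (Localization.AtPrime 𝔪) M 1) :=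
    (isLocalizedModule_iff_isBaseChange 𝔪.primeCompl (Localization.AtPrime 𝔪) _).mpr
      (TensorProduct.isBaseChange R M (Localization.AtPrime 𝔪))
  have hsurj : Function.Surjective (u.baseChange (Localization.AtPrime 𝔪)) := by
    intro z
    induction z using TensorProduct.induction_on with
    | zero => exact ⟨0, map_zero _⟩
    | tmul a x =>
      obtain ⟨y, hy⟩ := hu x
      have htu : IsUnit (algebraMap R (Localization.AtPrime 𝔪) t) :=
        IsLocalization.map_units (Localization.AtPrime 𝔪) ⟨t, ht⟩
      obtain ⟨v, hv⟩ : ∃ v : Localization.AtPrime 𝔪,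
          v * algebraMap R (Localization.AtPrime 𝔪) t = 1 := by
        exact ⟨_, htu.val_inv_mul⟩
      refine ⟨(v * a) • ((1 : Localization.AtPrime 𝔪) ⊗ₜ y), ?_⟩
      rw [map_smul, LinearMap.baseChange_tmul, hy, TensorProduct.tmul_smul,
        ← algebraMap_smul (Localization.AtPrime 𝔪) t, smul_smul]
      have hc : (v * a) * algebraMap R (Localization.AtPrime 𝔪) t = a := by
        rw [mul_right_comm, hv, one_mul]
      rw [hc, TensorProduct.smul_tmul', smul_eq_mul, mul_one]
    | add z w hz hw =>
      obtain ⟨z', hz'⟩ := hz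
      obtain ⟨w', hw'⟩ := hw
      exact ⟨z' + w', by rw [map_add, hz', hw']⟩
  have hinj' : Function.Injective (u.baseChange (Localization.AtPrime 𝔪)) :=
    OrzechProperty.injective_of_surjective_endomorphism _ hsurj
  intro x y hxy
  have h1 : (1 : Localization.AtPrime 𝔪) ⊗ₜ[R] (x - y) = (0 : (Localization.AtPrime 𝔪) ⊗[R] M) := by
    apply hinj'
    rw [LinearMap.baseChange_tmul, map_sub, hxy, sub_self, TensorProduct.tmul_zero, map_zero]
  obtain ⟨s, hs⟩ := (IsLocalizedModule.eq_zero_iff 𝔪.primeCompl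
    (TensorProduct.mk R (Localization.AtPrime 𝔪) M 1)).mp h1
  rw [Submonoid.smul_def] at hs
  have hs0 : (s : R) ≠ 0 := by
    intro h
    exact s.2 (h ▸ 𝔪.zero_mem)
  have := (NoZeroSMulDivisors.eq_zero_or_eq_zero_of_smul_eq_zero hs).resolve_left hs0
  exact sub_eq_zero.mp this

end Stmt8Aux

open Stmt8Aux in
/-- Let `R` be a domain of finite character with fraction field `Q`, and
`Λ` a module-finite `R`-algebra.  Let `M`, `N`, `K` be finitely generated `Λ`-modules,
torsion-free over `R`.  If `M_𝔪` is a direct summand of `N_𝔪` for all maximal ideals `𝔪`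
and `M_Q` is a direct summand of `K_Q`, then `M` is a direct summand of `N ⊕ K`. -/
theorem stmt8 (R : Type u) [CommRing R] [IsDomain R]
    (hfc : ∀ r : R, r ≠ 0 → {𝔪 : MaximalSpectrum R | r ∈ 𝔪.asIdeal}.Finite)
    (Λ : Type u) [Ring Λ] [Algebra R Λ] [Module.Finite R Λ]
    (M : Type u) [AddCommGroup M] [Module R M] [Module Λ M] [IsScalarTower R Λ M]
    [Module.Finite Λ M] [NoZeroSMulDivisors R M]
    (N : Type u) [AddCommGroup N] [Module R N] [Module Λ N] [IsScalarTower R Λ N]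
    [Module.Finite Λ N] [NoZeroSMulDivisors R N]
    (K : Type u) [AddCommGroup K] [Module R K] [Module Λ K] [IsScalarTower R Λ K]
    [Module.Finite Λ K] [NoZeroSMulDivisors R K]
    (hloc : ∀ (𝔪 : Ideal R) (h𝔪 : 𝔪.IsMaximal),
      ∃ (f : (M ⊗[R] Localization.AtPrime 𝔪) →ₗ[Λ] (N ⊗[R] Localization.AtPrime 𝔪))
        (g : (N ⊗[R] Localization.AtPrime 𝔪) →ₗ[Λ] (M ⊗[R] Localization.AtPrime 𝔪)),
        g.comp f = LinearMap.id)
    (hQ : ∃ (f : (M ⊗[R] FractionRing R) →ₗ[Λ] (K ⊗[R] FractionRing R))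
        (g : (K ⊗[R] FractionRing R) →ₗ[Λ] (M ⊗[R] FractionRing R)),
        g.comp f = LinearMap.id) :
    ∃ (f : M →ₗ[Λ] N × K) (g : N × K →ₗ[Λ] M), g.comp f = LinearMap.id := by
  classical
  haveI : Module.Finite R M := Module.Finite.trans Λ M
  -- Step 1 : clear denominators on the fraction-field splitting
  obtain ⟨F0, G0, hFG0⟩ := hQ
  obtain ⟨γ, δ, r, hrS, hδγ⟩ :=
    Stmt8Aux.clear_denominators (R := R) (nonZeroDivisors R)
      zero_notMem_nonZeroDivisors F0 G0 hFG0
  have hr0 : r ≠ 0 := nonZeroDivisors.ne_zero hrS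
  -- Step 2 : the finitely many maximal ideals containing r
  have hfin := hfc r hr0
  set T : Finset (MaximalSpectrum R) := hfin.toFinset with hTdef
  have hmemT : ∀ 𝔪 : MaximalSpectrum R, 𝔪 ∈ T ↔ r ∈ 𝔪.asIdeal := fun 𝔪 => by
    rw [hTdef, Set.Finite.mem_toFinset]; exact Iff.rfl
  -- Step 3 : clear denominators on the local splittings
  have hdata : ∀ 𝔪 : MaximalSpectrum R,
      ∃ (f1 : M →ₗ[Λ] N) (g1 : N →ₗ[Λ] M) (s1 : R),
        s1 ∈ 𝔪.asIdeal.primeCompl ∧ ∀ x : M, g1 (f1 x) = s1 • x := by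
    intro 𝔪
    obtain ⟨F, G, hFG⟩ := hloc 𝔪.asIdeal 𝔪.isMaximal
    have h0 : (0:R) ∉ 𝔪.asIdeal.primeCompl := fun h => h (zero_mem _)
    exact Stmt8Aux.clear_denominators (R := R) 𝔪.asIdeal.primeCompl h0 F G hFG
  choose lf lg ls hls hlgf using hdata
  -- Step 4 : CRT elements
  have hcrt : ∀ 𝔪 : MaximalSpectrum R, ∃ e : R, 𝔪 ∈ T →
      (e - 1 ∈ 𝔪.asIdeal ∧ ∀ 𝔫 ∈ T, 𝔫 ≠ 𝔪 → e ∈ 𝔫.asIdeal) := by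
    intro 𝔪
    by_cases h𝔪 : 𝔪 ∈ T
    · have hcop : Pairwise fun i j : {x // x ∈ T} => IsCoprime i.1.asIdeal j.1.asIdeal := by
        intro i j hij
        refine Ideal.isCoprime_iff_sup_eq.mpr (Ideal.IsMaximal.coprime_of_ne i.1.isMaximal j.1.isMaximal ?_)
        intro h
        exact hij (Subtype.ext (MaximalSpectrum.ext h))
      obtain ⟨e0, he0⟩ := Ideal.exists_forall_sub_mem_ideal
        (I := fun j : {x // x ∈ T} => j.1.asIdeal) hcop
        (fun j => if (j : MaximalSpectrum R) = 𝔪 then 1 else 0)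
      refine ⟨e0, fun _ => ⟨?_, ?_⟩⟩
      · simpa using he0 ⟨𝔪, h𝔪⟩
      · intro 𝔫 h𝔫T h𝔫ne
        simpa [h𝔫ne] using he0 ⟨𝔫, h𝔫T⟩
    · exact ⟨0, fun h => absurd h h𝔪⟩
  choose e he using hcrt
  -- Step 5 : the global maps
  set f : M →ₗ[Λ] N := ∑ 𝔪 ∈ T, e 𝔪 • lf 𝔪 with hfdef
  set g : N →ₗ[Λ] M := ∑ 𝔪 ∈ T, e 𝔪 • lg 𝔪 with hgdef
  set u : M →ₗ[Λ] M := g.comp f + δ.comp γ with hudef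
  have hu_x : ∀ x : M, u x = g (f x) + r • x := by
    intro x
    rw [hudef]
    simp only [LinearMap.add_apply, LinearMap.comp_apply, hδγ x]
  -- the ideal of achievable scalars
  set I : Ideal R :=
    { carrier := {t | ∃ (G' : N →ₗ[Λ] M) (D' : K →ₗ[Λ] M),
        ∀ x : M, G' (f x) + D' (γ x) = t • x}
      add_mem' := by
        rintro t₁ t₂ ⟨G₁, D₁, h₁⟩ ⟨G₂, D₂, h₂⟩
        refine ⟨G₁ + G₂, D₁ + D₂, fun x => ?_⟩
        simp only [LinearMap.add_apply, add_smul, ← h₁ x, ← h₂ x]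
        abel
      zero_mem' := ⟨0, 0, fun x => by simp⟩
      smul_mem' := by
        rintro c t ⟨G', D', h⟩
        refine ⟨c • G', c • D', fun x => ?_⟩
        simp only [LinearMap.smul_apply]
        rw [← smul_add, h x, smul_smul, smul_eq_mul] } with hIdef
  have hmemI : ∀ c : R, c ∈ I ↔ ∃ (G' : N →ₗ[Λ] M) (D' : K →ₗ[Λ] M),
      ∀ x : M, G' (f x) + D' (γ x) = c • x := fun c => Iff.rfl
  have hrI : r ∈ I := (hmemI r).mpr ⟨0, δ, fun x => by simp [hδγ x]⟩
  -- Step 6 : for each maximal ideal in T, produce an element of I outside it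
  have hTI : ∀ 𝔪 : MaximalSpectrum R, 𝔪 ∈ T → ∃ t : R, t ∈ I ∧ t ∉ 𝔪.asIdeal := by
    intro 𝔪 h𝔪T
    obtain ⟨he1, he2⟩ := he 𝔪 h𝔪T
    have hrm : r ∈ 𝔪.asIdeal := (hmemT 𝔪).mp h𝔪T
    set uR : M →ₗ[R] M := LinearMap.restrictScalars R u with huRdef
    set W : Submodule R M :=
      LinearMap.range uR ⊔ 𝔪.asIdeal • (⊤ : Submodule R M) with hWdef
    have hsmulmem : ∀ c : R, c ∈ 𝔪.asIdeal → ∀ y : M,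
        c • y ∈ 𝔪.asIdeal • (⊤ : Submodule R M) :=
      fun c hc y => Submodule.smul_mem_smul hc Submodule.mem_top
    have hgapp : ∀ z : N, g z = ∑ 𝔫 ∈ T, e 𝔫 • lg 𝔫 z := by
      intro z
      rw [hgdef]
      simp [LinearMap.sum_apply, LinearMap.smul_apply]
    have hlgfx : ∀ x : M, lg 𝔪 (f x) = ∑ 𝔫 ∈ T, e 𝔫 • lg 𝔪 (lf 𝔫 x) := by
      intro x
      rw [hfdef]
      simp [LinearMap.sum_apply, LinearMap.smul_apply, map_sum, LinearMap.map_smul_of_tower]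
    have hE : ∀ x : M, g (f x) - (e 𝔪 * e 𝔪 * ls 𝔪) • x ∈
        𝔪.asIdeal • (⊤ : Submodule R M) := by
      intro x
      have h1 : g (f x) = e 𝔪 • lg 𝔪 (f x) + ∑ 𝔫 ∈ T.erase 𝔪, e 𝔫 • lg 𝔫 (f x) := by
        rw [hgapp (f x), ← Finset.add_sum_erase T (fun 𝔫 => e 𝔫 • lg 𝔫 (f x)) h𝔪T]
      have h2 : e 𝔪 • lg 𝔪 (f x) = (e 𝔪 * e 𝔪 * ls 𝔪) • x
          + ∑ 𝔫 ∈ T.erase 𝔪, (e 𝔪 * e 𝔫) • lg 𝔪 (lf 𝔫 x) := by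
        rw [hlgfx x, ← Finset.add_sum_erase T (fun 𝔫 => e 𝔫 • lg 𝔪 (lf 𝔫 x)) h𝔪T,
          smul_add, Finset.smul_sum]
        congr 1
        · rw [hlgf 𝔪 x, smul_smul, smul_smul, mul_assoc]
        · exact Finset.sum_congr rfl fun 𝔫 h𝔫 => smul_smul (e 𝔪) (e 𝔫) _
      have h3 : g (f x) - (e 𝔪 * e 𝔪 * ls 𝔪) • x
          = (∑ 𝔫 ∈ T.erase 𝔪, (e 𝔪 * e 𝔫) • lg 𝔪 (lf 𝔫 x))
            + ∑ 𝔫 ∈ T.erase 𝔪, e 𝔫 • lg 𝔫 (f x) := by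
        rw [h1, h2]; abel
      rw [h3]
      refine Submodule.add_mem _ (Submodule.sum_mem _ fun 𝔫 h𝔫 => ?_)
        (Submodule.sum_mem _ fun 𝔫 h𝔫 => ?_)
      · refine hsmulmem _ (Ideal.mul_mem_left _ _ ?_) _
        exact (he 𝔫 (Finset.mem_of_mem_erase h𝔫)).2 𝔪 h𝔪T
          (Ne.symm (Finset.ne_of_mem_erase h𝔫))
      · exact hsmulmem _ ((he 𝔫 (Finset.mem_of_mem_erase h𝔫)).2 𝔪 h𝔪T
          (Ne.symm (Finset.ne_of_mem_erase h𝔫))) _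
    have hsW : ∀ x : M, ls 𝔪 • x ∈ W := by
      intro x
      have hkey : ls 𝔪 • x = u x + (-1 : R) • (r • x)
          + (-1 : R) • (g (f x) - (e 𝔪 * e 𝔪 * ls 𝔪) • x)
          + (-1 : R) • ((e 𝔪 * e 𝔪 * ls 𝔪 - ls 𝔪) • x) := by
        rw [hu_x x]
        simp only [neg_smul, one_smul, sub_smul]
        abel
      rw [hkey]
      have hm1 : u x ∈ W := Submodule.mem_sup_left ⟨x, rfl⟩
      have hm2 : (-1 : R) • (r • x) ∈ W :=
        W.smul_mem _ (Submodule.mem_sup_right (hsmulmem r hrm x))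
      have hm3 : (-1 : R) • (g (f x) - (e 𝔪 * e 𝔪 * ls 𝔪) • x) ∈ W :=
        W.smul_mem _ (Submodule.mem_sup_right (hE x))
      have hcoef : e 𝔪 * e 𝔪 * ls 𝔪 - ls 𝔪 ∈ 𝔪.asIdeal := by
        have h4 : e 𝔪 * e 𝔪 * ls 𝔪 - ls 𝔪 = ((e 𝔪 - 1) * (e 𝔪 + 1)) * ls 𝔪 := by ring
        rw [h4]
        exact Ideal.mul_mem_right _ _ (Ideal.mul_mem_right _ _ he1)
      have hm4 : (-1 : R) • ((e 𝔪 * e 𝔪 * ls 𝔪 - ls 𝔪) • x) ∈ W :=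
        W.smul_mem _ (Submodule.mem_sup_right (hsmulmem _ hcoef x))
      exact W.add_mem (W.add_mem (W.add_mem hm1 hm2) hm3) hm4
    -- W = ⊤ via maximality
    have hWtop : ∀ x : M, x ∈ W := by
      set J : Ideal R :=
        { carrier := {c | ∀ x : M, c • x ∈ W}
          add_mem' := fun hc hd x => by rw [add_smul]; exact W.add_mem (hc x) (hd x)
          zero_mem' := fun x => by rw [zero_smul]; exact W.zero_mem
          smul_mem' := fun c d hd x => by
            rw [smul_eq_mul, mul_smul]; exact W.smul_mem c (hd x) } with hJdef
      have hJmem : ∀ c : R, c ∈ J ↔ ∀ x : M, c • x ∈ W := fun c => Iff.rfl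
      have hJtop : J = ⊤ := by
        by_contra hne
        have hlem := 𝔪.isMaximal.eq_of_le hne
          (fun c hc => (hJmem c).mpr fun x => Submodule.mem_sup_right (hsmulmem c hc x))
        have hlsJ : ls 𝔪 ∈ J := (hJmem _).mpr hsW
        exact (hls 𝔪) (by rw [hlem]; exact hlsJ)
      intro x
      have h1 : (1:R) ∈ J := by rw [hJtop]; trivial
      simpa using (hJmem 1).mp h1 x
    -- Nakayama
    have hfgQt : (⊤ : Submodule R (M ⧸ LinearMap.range uR)).FG :=
      Module.Finite.fg_top (R := R)
    have hle : (⊤ : Submodule R (M ⧸ LinearMap.range uR)) ≤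
        𝔪.asIdeal • (⊤ : Submodule R (M ⧸ LinearMap.range uR)) := by
      intro z _
      obtain ⟨x, rfl⟩ := (LinearMap.range uR).mkQ_surjective z
      obtain ⟨y, hy, w, hw, hywx⟩ := Submodule.mem_sup.mp (hWtop x)
      have hzy : (LinearMap.range uR).mkQ y = 0 := (Submodule.Quotient.mk_eq_zero _).mpr hy
      have h1 : (LinearMap.range uR).mkQ x = (LinearMap.range uR).mkQ w := by
        rw [← hywx, map_add, hzy, zero_add]
      rw [h1]
      have h2 : (LinearMap.range uR).mkQ w ∈
          Submodule.map (LinearMap.range uR).mkQ (𝔪.asIdeal • (⊤ : Submodule R M)) :=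
        Submodule.mem_map_of_mem hw
      rw [Submodule.map_smul''] at h2
      exact Submodule.smul_mono le_rfl le_top h2
    obtain ⟨t, htm, htz⟩ :=
      Submodule.exists_sub_one_mem_and_smul_eq_zero_of_fg_of_le_smul 𝔪.asIdeal ⊤ hfgQt hle
    have htnot : t ∉ 𝔪.asIdeal := by
      intro ht
      have h1 : (1:R) ∈ 𝔪.asIdeal := by
        have := 𝔪.asIdeal.sub_mem ht htm
        simpa using this
      exact 𝔪.isMaximal.ne_top ((Ideal.eq_top_iff_one _).mpr h1)
    have htu : ∀ x : M, ∃ y : M, u y = t • x := by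
      intro x
      have h3 := htz ((LinearMap.range uR).mkQ x) Submodule.mem_top
      rw [← map_smul] at h3
      obtain ⟨y, hy⟩ := (Submodule.Quotient.mk_eq_zero _).mp h3
      exact ⟨y, hy⟩
    have hinj : Function.Injective u :=
      Stmt8Aux.endo_injective (R := R) M 𝔪.asIdeal uR t htnot htu
    -- build the left inverse multiplier
    have hrangeΛ : ∀ x : M, (t • (LinearMap.id : M →ₗ[Λ] M)) x ∈ LinearMap.range u := by
      intro x
      obtain ⟨y, hy⟩ := htu x
      exact ⟨y, by simpa using hy⟩
    obtain ⟨h2, hh2⟩ : ∃ h2 : M →ₗ[Λ] M, ∀ x : M, h2 (u x) = t • x := by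
      refine ⟨(LinearEquiv.ofInjective u hinj).symm.toLinearMap ∘ₗ
        LinearMap.codRestrict (LinearMap.range u)
          (t • (LinearMap.id : M →ₗ[Λ] M)) hrangeΛ, fun x => ?_⟩
      rw [LinearMap.comp_apply]
      rw [LinearEquiv.coe_coe, LinearEquiv.symm_apply_eq]
      apply Subtype.ext
      rw [LinearEquiv.ofInjective_apply, LinearMap.codRestrict_apply]
      rw [LinearMap.smul_apply, LinearMap.id_apply, LinearMap.map_smul_of_tower]
    refine ⟨t, (hmemI t).mpr ⟨h2 ∘ₗ g, h2 ∘ₗ δ, fun x => ?_⟩, htnot⟩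
    have h5 : g (f x) + δ (γ x) = u x := by rw [hudef]; rfl
    rw [LinearMap.comp_apply, LinearMap.comp_apply, ← LinearMap.map_add, h5, hh2]
  -- Step 7 : conclude
  have hItop : I = ⊤ := by
    by_contra hne
    obtain ⟨𝕞, h𝕞max, hle⟩ := Ideal.exists_le_maximal I hne
    by_cases hr𝕞 : r ∈ 𝕞
    · obtain ⟨t, htI, htn⟩ := hTI ⟨𝕞, h𝕞max⟩ ((hmemT _).mpr hr𝕞)
      exact htn (hle htI)
    · exact hr𝕞 (hle hrI)
  have h1I : (1:R) ∈ I := by rw [hItop]; trivial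
  obtain ⟨G', D', hGD⟩ := (hmemI 1).mp h1I
  refine ⟨LinearMap.prod f γ, LinearMap.coprod G' D', ?_⟩
  ext x
  have := hGD x
  rw [one_smul] at this
  simpa [LinearMap.comp_apply, LinearMap.prod_apply, LinearMap.coprod_apply] using this
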